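/- A strategy σ in the Robber and Captain game R&C(H1,H2) is monotone if, and only if, for each vertex v_i = (M_i,C_i) in the game tree T(σ) and each child (M_{i+1},C_{i+1}) of v_i in T(σ), the escape door ED(v_i,M_{i+1}) is empty. -/

import Mathlib

/-- A hypergraph, identified (as in the paper) with its finite set of
finite hyperedges; its nodes are the vertices occurring in some hyperedge. -/
structure RCHypergraph (α : Type*) where
  edges : Finset (Finset α)

namespace RCHypergraph

variable {α : Type*}

/-- The set of nodes of a hypergraph. -/
def nodes (H : RCHypergraph α) : Set α := {x | ∃ h ∈ H.edges, x ∈ h}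

/-- `H1 ≤ H2`: every hyperedge of `H1` is contained in some hyperedge of `H2`. -/
def HLe (H1 H2 : RCHypergraph α) : Prop := ∀ h1 ∈ H1.edges, ∃ h2 ∈ H2.edges, h1 ⊆ h2

/-- `H` is contained in `H'`. -/
def Contained (H H' : RCHypergraph α) : Prop :=
  ∀ h ∈ H.edges, h ∉ H'.edges → ∃ h' ∈ H'.edges, h' ∉ H.edges ∧ h ⊆ h'

/-- `H` is properly contained in `H'`. -/
def ProperlyContained (H H' : RCHypergraph α) : Prop := H.Contained H' ∧ H ≠ H'

/-- A hypergraph is reduced if no hyperedge is a proper subset of another one. -/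
def Reduced (H : RCHypergraph α) : Prop := ∀ h ∈ H.edges, ∀ h' ∈ H.edges, ¬ h ⊂ h'

end RCHypergraph

/-- The type of hyperedges of `H`. -/
abbrev Hyperedge {α : Type*} (H : RCHypergraph α) := {h : Finset α // h ∈ H.edges}

/-- A join tree for a hypergraph `H`: a tree whose vertices are the hyperedges of `H`
such that, for every node `X`, the hyperedges containing `X` induce a connected subtree. -/
structure JoinTree {α : Type*} (H : RCHypergraph α) where
  T : SimpleGraph (Hyperedge H)
  isTree : T.IsTree
  node_connected : ∀ X : α, (T.induce {h : Hyperedge H | X ∈ h.1}).Preconnected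

/-- A hypergraph is acyclic iff it has a join tree. -/
def RCHypergraph.Acyclic {α : Type*} (H : RCHypergraph α) : Prop := Nonempty (JoinTree H)

/-- `Ha` is a tree projection of `H1` w.r.t. `H2`. -/
def IsTreeProjection {α : Type*} (H1 H2 Ha : RCHypergraph α) : Prop :=
  Ha.Acyclic ∧ H1.HLe Ha ∧ Ha.HLe H2

/-- `Ha` is a minimal tree projection of `H1` w.r.t. `H2`. -/
def IsMinimalTreeProjection {α : Type*} (H1 H2 Ha : RCHypergraph α) : Prop :=
  IsTreeProjection H1 H2 Ha ∧
  ∀ Ha' : RCHypergraph α, IsTreeProjection H1 H2 Ha' → ¬ Ha'.ProperlyContained Ha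

namespace RCHypergraph

variable {α : Type*}

/-- `X` is `[V]`-adjacent to `Y`: some hyperedge contains both outside of `V`. -/
def Adj (H : RCHypergraph α) (V : Set α) (X Y : α) : Prop :=
  ∃ h ∈ H.edges, X ∈ h ∧ Y ∈ h ∧ X ∉ V ∧ Y ∉ V

/-- There is a `[V]`-path from `X` to `Y`. -/
def VPath (H : RCHypergraph α) (V : Set α) : α → α → Prop :=
  Relation.ReflTransGen (H.Adj V)

/-- The set `W` is `[V]`-connected. -/
def VConnected (H : RCHypergraph α) (V W : Set α) : Prop :=
  ∀ X ∈ W, ∀ Y ∈ W, H.VPath V X Y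

/-- `C` is a `[V]`-component of `H`: a maximal `[V]`-connected nonempty subset
of `nodes(H) \ V`. -/
def IsComponent (H : RCHypergraph α) (V C : Set α) : Prop :=
  C.Nonempty ∧ C ⊆ H.nodes \ V ∧ H.VConnected V C ∧
  ∀ C' : Set α, C ⊆ C' → C' ⊆ H.nodes \ V → H.VConnected V C' → C' = C

/-- The frontier `Fr(C,H)`: the union of all hyperedges meeting `C`. -/
def Fr (H : RCHypergraph α) (C : Set α) : Set α :=
  {x | ∃ h ∈ H.edges, x ∈ h ∧ ∃ y ∈ C, y ∈ h}

/-- The border `∂(C,H) = Fr(C,H) \ C`. -/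
def border (H : RCHypergraph α) (C : Set α) : Set α := H.Fr C \ C

/-- `X` `[V]`-touches the set `W`: `X` is `[∅]`-adjacent to some node `Z` from which
there is a `[V]`-path to some node of `W`. -/
def Touches (H : RCHypergraph α) (V : Set α) (X : α) (W : Set α) : Prop :=
  ∃ Z : α, H.Adj ∅ X Z ∧ ∃ Y ∈ W, H.VPath V Z Y

end RCHypergraph

namespace JoinTree

variable {α : Type*} {H : RCHypergraph α}

/-- The vertices of the subtree rooted at `h_s` when the join tree is rooted at
(the side of) `h_r`, for adjacent vertices `h_r`, `h_s`. -/
def subtreeVerts (JT : JoinTree H) (h_r h_s : Hyperedge H) : Set (Hyperedge H) :=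
  {v | JT.T.dist v h_s < JT.T.dist v h_r}

/-- The nodes occurring in the vertices of the subtree rooted at `h_s` (w.r.t. `h_r`). -/
def subtreeNodes (JT : JoinTree H) (h_r h_s : Hyperedge H) : Set α :=
  {x | ∃ v ∈ JT.subtreeVerts h_r h_s, x ∈ v.1}

/-- `h_s` is a child of `h_r` in the join tree rooted at `root`. -/
def IsChild (JT : JoinTree H) (root h_r h_s : Hyperedge H) : Prop :=
  JT.T.Adj h_r h_s ∧ JT.T.dist root h_r < JT.T.dist root h_s

end JoinTree

/-- The sub-hypergraph of `H1` induced by the node set `N` is `[∅]`-connected. -/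
def InducedConn {α : Type*} (H1 : RCHypergraph α) (N : Set α) : Prop :=
  ∀ X ∈ N, ∀ Y ∈ N,
    Relation.ReflTransGen
      (fun a b => a ∈ N ∧ b ∈ N ∧ ∃ h ∈ H1.edges, a ∈ h ∧ b ∈ h) X Y

/-- A join tree of `Ha` is `H1`-connected. -/
def JoinTree.IsConnectedFor {α : Type*} {Ha : RCHypergraph α} (JT : JoinTree Ha)
    (H1 : RCHypergraph α) : Prop :=
  ∀ h_r h_s : Hyperedge Ha, JT.T.Adj h_r h_s → InducedConn H1 (JT.subtreeNodes h_r h_s)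

/-- `C` is the component `C⊤(h)` associated with vertex `h` of the join tree rooted at
`root`: conventionally `nodes(H1)` for the root, and otherwise the unique
`[h_p]`-component of `H1` (for `h_p` the parent of `h`) determined by the subtree at `h`. -/
def CtopAt {α : Type*} (H1 : RCHypergraph α) {Ha : RCHypergraph α} (JT : JoinTree Ha)
    (root h : Hyperedge Ha) (C : Set α) : Prop :=
  (h = root ∧ C = H1.nodes) ∨
  ∃ h_p : Hyperedge Ha, JT.IsChild root h_p h ∧ H1.IsComponent (h_p.1 : Set α) C ∧
    JT.subtreeNodes h_p h = C ∪ ((h.1 : Set α) ∩ (h_p.1 : Set α))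

/-- The join tree `JT` of `Ha`, rooted at `root`, is an `H1`-component tree. -/
def JoinTree.IsComponentTreeFor {α : Type*} {Ha : RCHypergraph α} (JT : JoinTree Ha)
    (H1 : RCHypergraph α) (root : Hyperedge Ha) : Prop :=
  (∀ h_r h_s : Hyperedge Ha, JT.IsChild root h_r h_s →
    (∃! C : Set α, H1.IsComponent (h_r.1 : Set α) C ∧
      JT.subtreeNodes h_r h_s = C ∪ ((h_s.1 : Set α) ∩ (h_r.1 : Set α))) ∧
    (∀ C : Set α, H1.IsComponent (h_r.1 : Set α) C →
      JT.subtreeNodes h_r h_s = C ∪ ((h_s.1 : Set α) ∩ (h_r.1 : Set α)) →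
      ((h_s.1 : Set α) ∩ C).Nonempty ∧ (h_s.1 : Set α) ⊆ H1.Fr C)) ∧
  (∀ h_r : Hyperedge Ha, ∀ Ctop : Set α, CtopAt H1 JT root h_r Ctop →
    ∀ C_r : Set α, H1.IsComponent (h_r.1 : Set α) C_r → C_r ⊆ Ctop →
    ∃! h_s : Hyperedge Ha, JT.IsChild root h_r h_s ∧
      JT.subtreeNodes h_r h_s = C_r ∪ ((h_s.1 : Set α) ∩ (h_r.1 : Set α)))

/-! ### The Robber and Captain game -/

/-- A position for the Captain: a set of nodes included in some hyperedge of `H2`. -/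
def IsPosition {α : Type*} (H2 : RCHypergraph α) (M : Set α) : Prop :=
  ∃ h2 ∈ H2.edges, M ⊆ (h2 : Set α)

/-- A configuration of the game `R&C(H1,H2)`. -/
def IsConfig {α : Type*} (H1 H2 : RCHypergraph α) (M C : Set α) : Prop :=
  IsPosition H2 M ∧ (H1.IsComponent M C ∨ C = ∅ ∨ (M = ∅ ∧ C = H1.nodes))

/-- `C_j` is an `[(M_i,C_i),M_j]`-escape component: an `[M_j]`-component of `H1`
such that `C_i ∪ C_j` is `[M_i ∩ M_j]`-connected. -/
def EscapeComp {α : Type*} (H1 : RCHypergraph α) (M_i C_i M_j C_j : Set α) : Prop :=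
  H1.IsComponent M_j C_j ∧ H1.VConnected (M_i ∩ M_j) (C_i ∪ C_j)

/-- The escape door `ED((M_i,C),M') = ∂(C,H1) \ M'` (it only depends on `C` and `M'`). -/
def escapeDoor {α : Type*} (H1 : RCHypergraph α) (C M' : Set α) : Set α :=
  H1.border C \ M'

/-- `σ` is a strategy for the Captain in `R&C(H1,H2)`. -/
def IsStrategy {α : Type*} (H1 H2 : RCHypergraph α) (σ : Set α → Set α → Set α) : Prop :=
  ∀ M C : Set α, IsConfig H1 H2 M C → C ≠ ∅ →
    IsPosition H2 (σ M C) ∧ σ M C ⊆ H1.Fr C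

/-- One step of the game played according to `σ`: from configuration `p` the Captain
moves to `σ p.1 p.2`, and the Robber either selects an escape component or is captured. -/
def GameStep {α : Type*} (H1 : RCHypergraph α) (σ : Set α → Set α → Set α)
    (p q : Set α × Set α) : Prop :=
  p.2 ≠ ∅ ∧ q.1 = σ p.1 p.2 ∧
    (EscapeComp H1 p.1 p.2 q.1 q.2 ∨
      ((∀ C : Set α, ¬ EscapeComp H1 p.1 p.2 q.1 C) ∧ q.2 = ∅))

/-- `p` is a vertex of the game tree `T(σ)` (reachable from the root `(∅, nodes(H1))`). -/
def InGameTree {α : Type*} (H1 : RCHypergraph α) (σ : Set α → Set α → Set α)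
    (p : Set α × Set α) : Prop :=
  Relation.ReflTransGen (GameStep H1 σ) (∅, H1.nodes) p

/-- `σ` is winning: the game tree `T(σ)` is finite, i.e., there is no infinite play. -/
def Winning {α : Type*} (H1 : RCHypergraph α) (σ : Set α → Set α → Set α) : Prop :=
  ¬ ∃ f : ℕ → Set α × Set α, f 0 = (∅, H1.nodes) ∧ ∀ n, GameStep H1 σ (f n) (f (n + 1))

/-- `M_j` is a monotone move in `(M_i, C_i)`. -/
def MonotoneMove {α : Type*} (H1 : RCHypergraph α) (M_i C_i M_j : Set α) : Prop :=
  ∀ C : Set α, EscapeComp H1 M_i C_i M_j C → C ⊆ C_i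

/-- `σ` is a monotone strategy. -/
def MonotoneStrategy {α : Type*} (H1 : RCHypergraph α) (σ : Set α → Set α → Set α) : Prop :=
  ∀ p q : Set α × Set α, InGameTree H1 σ p → GameStep H1 σ p q →
    MonotoneMove H1 p.1 p.2 q.1


section Aux

variable {α : Type*}

lemma adj_symm' (H : RCHypergraph α) (V : Set α) {X Y : α} (h : H.Adj V X Y) :
    H.Adj V Y X := by
  obtain ⟨e, he, hx, hy, hxv, hyv⟩ := h
  exact ⟨e, he, hy, hx, hyv, hxv⟩

lemma vpath_symm' (H : RCHypergraph α) (V : Set α) {X Y : α} (h : H.VPath V X Y) :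
    H.VPath V Y X :=
  (@Relation.ReflTransGen.symmetric _ (H.Adj V) ⟨fun _ _ => adj_symm' H V⟩).symm _ _ h

lemma vpath_mono' (H : RCHypergraph α) {V V' : Set α} (hVV : V' ⊆ V) {X Y : α}
    (h : H.VPath V X Y) : H.VPath V' X Y := by
  refine Relation.ReflTransGen.mono (fun a b hab => ?_) _ _ h
  obtain ⟨e, he, ha, hb, hav, hbv⟩ := hab
  exact ⟨e, he, ha, hb, fun hc => hav (hVV hc), fun hc => hbv (hVV hc)⟩

/-- The set of nodes `[V]`-reachable from `x` is a `[V]`-component, provided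
`x ∈ nodes(H) \ V`. -/
lemma isComponent_reach (H : RCHypergraph α) (V : Set α) {x : α}
    (hx : x ∈ H.nodes \ V) : H.IsComponent V {z | H.VPath V x z} := by
  have hsub : {z | H.VPath V x z} ⊆ H.nodes \ V := by
    intro z hz
    induction hz with
    | refl => exact hx
    | tail _ hbc _ =>
      obtain ⟨e, he, _, hc, _, hcv⟩ := hbc
      exact ⟨⟨e, he, hc⟩, hcv⟩
  refine ⟨⟨x, Relation.ReflTransGen.refl⟩, hsub, ?_, ?_⟩
  · intro z hz w hw
    exact (vpath_symm' H V hz).trans hw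
  · intro C' hCC' hC'sub hC'conn
    refine Set.Subset.antisymm (fun z hz => ?_) hCC'
    exact hC'conn x (hCC' Relation.ReflTransGen.refl) z hz

/-- Classification of vertices of the game tree. -/
lemma inGameTree_spec (H1 : RCHypergraph α) (σ : Set α → Set α → Set α)
    {p : Set α × Set α} (hp : InGameTree H1 σ p) :
    p.2 = H1.nodes ∨ H1.IsComponent p.1 p.2 ∨ p.2 = ∅ := by
  induction hp with
  | refl => exact Or.inl rfl
  | tail _ hstep _ =>
    rcases hstep.2.2 with hesc | ⟨_, hq⟩
    · exact Or.inr (Or.inl hesc.1)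
    · exact Or.inr (Or.inr hq)

/-- Closure lemma: if the border of the component `C_i` is covered by `M'`,
then a `[M_i ∩ M']`-path starting in `C_i` stays in `C_i`. -/
lemma step_stays (H1 : RCHypergraph α) {M_i C_i M' : Set α}
    (hcomp : H1.IsComponent M_i C_i) (hb : H1.border C_i ⊆ M')
    {a b : α} (ha : a ∈ C_i) (hab : H1.Adj (M_i ∩ M') a b) : b ∈ C_i := by
  obtain ⟨e, he, hae, hbe, _, hbv⟩ := hab
  by_cases hbC : b ∈ C_i
  · exact hbC
  · exfalso
    have hbFr : b ∈ H1.Fr C_i := ⟨e, he, hbe, a, ha, hae⟩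
    have hbM' : b ∈ M' := hb ⟨hbFr, hbC⟩
    have hbMi : b ∉ M_i := fun h => hbv ⟨h, hbM'⟩
    have haMi : a ∉ M_i := (hcomp.2.1 ha).2
    have hadj : H1.Adj M_i a b := ⟨e, he, hae, hbe, haMi, hbMi⟩
    -- C_i ∪ {b} is [M_i]-connected, contradicting maximality
    have hmax := hcomp.2.2.2 (C_i ∪ {b}) Set.subset_union_left ?_ ?_
    · exact hbC (hmax ▸ Set.mem_union_right _ rfl)
    · rintro z (hz | hz)
      · exact hcomp.2.1 hz
      · rcases hz with rfl
        exact ⟨⟨e, he, hbe⟩, hbMi⟩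
    · rintro z (hz | hz) w (hw | hw)
      · exact hcomp.2.2.1 z hz w hw
      · rcases hw with rfl
        exact (hcomp.2.2.1 z hz a ha).tail hadj
      · rcases hz with rfl
        exact (Relation.ReflTransGen.single (adj_symm' H1 _ hadj)).trans
          (hcomp.2.2.1 a ha w hw)
      · rcases hz with rfl; rcases hw with rfl
        exact Relation.ReflTransGen.refl

lemma path_stays (H1 : RCHypergraph α) {M_i C_i M' : Set α}
    (hcomp : H1.IsComponent M_i C_i) (hb : H1.border C_i ⊆ M')
    {a b : α} (ha : a ∈ C_i) (hab : H1.VPath (M_i ∩ M') a b) : b ∈ C_i := by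
  induction hab with
  | refl => exact ha
  | tail _ hbc ih => exact step_stays H1 hcomp hb ih hbc

end Aux

theorem monotone_iff_escape_doors_empty {α : Type*} (H1 H2 : RCHypergraph α)
    (hle : H1.HLe H2) (σ : Set α → Set α → Set α) (hσ : IsStrategy H1 H2 σ) :
    MonotoneStrategy H1 σ ↔
      ∀ p q : Set α × Set α, InGameTree H1 σ p → GameStep H1 σ p q →
        escapeDoor H1 p.2 q.1 = ∅ := by
  constructor
  · -- monotone ⇒ escape doors empty
    intro hmono p q hp hstep
    by_contra hne
    obtain ⟨x, hx⟩ := Set.nonempty_iff_ne_empty.2 hne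
    obtain ⟨⟨hxFr, hxC⟩, hxM'⟩ := hx
    rcases inGameTree_spec H1 σ hp with hroot | hcomp | hempty
    · -- p.2 = nodes H1 : border is empty
      obtain ⟨e, he, hxe, _⟩ := hxFr
      exact hxC (hroot ▸ ⟨e, he, hxe⟩)
    · -- p.2 is a component: build an escape component through x
      obtain ⟨e, he, hxe, y, hyC, hye⟩ := hxFr
      have hxn : x ∈ H1.nodes \ q.1 := ⟨⟨e, he, hxe⟩, hxM'⟩
      set C' : Set α := {z | H1.VPath q.1 x z} with hC'
      have hC'comp : H1.IsComponent q.1 C' := isComponent_reach H1 q.1 hxn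
      -- every node of p.2 ∪ C' has a [p.1 ∩ q.1]-path to x
      have hbridge : H1.Adj (p.1 ∩ q.1) y x :=
        ⟨e, he, hye, hxe, fun h => (hcomp.2.1 hyC).2 h.1, fun h => hxM' h.2⟩
      have hto_x : ∀ w ∈ p.2 ∪ C', H1.VPath (p.1 ∩ q.1) w x := by
        rintro w (hw | hw)
        · exact (vpath_mono' H1 Set.inter_subset_left
            (hcomp.2.2.1 w hw y hyC)).tail hbridge
        · exact vpath_symm' H1 _ (vpath_mono' H1 Set.inter_subset_right hw)
      have hesc : EscapeComp H1 p.1 p.2 q.1 C' := by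
        refine ⟨hC'comp, fun u hu v hv => ?_⟩
        exact (hto_x u hu).trans (vpath_symm' H1 _ (hto_x v hv))
      rcases hstep.2.2 with _ | ⟨hno, _⟩
      · exact hxC (hmono p q hp hstep C' hesc Relation.ReflTransGen.refl)
      · exact hno C' hesc
    · exact hstep.1 hempty
  · -- escape doors empty ⇒ monotone
    intro hED p q hp hstep C hesc
    rcases inGameTree_spec H1 σ hp with hroot | hcomp | hempty
    · -- p.2 = nodes H1
      rw [hroot]
      exact fun v hv => (hesc.1.2.1 hv).1
    · -- p.2 is a component
      have hb : H1.border p.2 ⊆ q.1 := by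
        intro z hz
        by_contra hzq
        have : z ∈ escapeDoor H1 p.2 q.1 := ⟨hz, hzq⟩
        rw [hED p q hp hstep] at this
        exact this
      obtain ⟨y, hy⟩ := hcomp.1
      intro v hv
      have hpath : H1.VPath (p.1 ∩ q.1) y v :=
        hesc.2 y (Set.mem_union_left _ hy) v (Set.mem_union_right _ hv)
      exact path_stays H1 hcomp hb hy hpath
    · exact absurd hempty hstep.1
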